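/- Fix k ≥ 1. In the ring B^(k)[t] ⊗ ℚ the relation b̃^1_k · b^1_k + 2·Σ_{r=1}^k (-1)^r · a^1_{k+r} · a^1_{k-r} = 0 holds, where b^1_k := b_k + Σ_{j=1}^k c_{k-j}·h^1_j(-t), b̃^1_k := b̃_k + Σ_{j=1}^k c_{k-j}·h^1_j(-t), a^1_p := (1/2)c_p + Σ_{j=1}^p c_{p-j}·h^1_j(-t), and h^1_j(-t) = (-t_1)^j. -/

import Mathlib

/-!
The ring `B^(k)[t] ⊗ ℚ`: we work in `RB = ℚ[b̃_k, b_1, b_2, …, t_1, t_2, …]`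
(the variable `Sum.inl 0` is `b̃_k`, `Sum.inl p` for `p ≥ 1` is `b_p`, and
`Sum.inr i` for `i ≥ 1` is `t_i`) modulo the ideal `J^(k)`.
-/

noncomputable section
open MvPolynomial Finset
open scoped Classical

abbrev RB : Type := MvPolynomial (ℕ ⊕ ℕ) ℚ

/-- The variable `t_i`. -/
def tv (i : ℕ) : RB := X (Sum.inr i)

/-- The variable `b̃_k`. -/
def btil : RB := X (Sum.inl 0)

/-- `b_p`, with `b_0 = 1` and `b_p = 0` for `p < 0`. -/
def bB (p : ℤ) : RB := if p < 0 then 0 else if p = 0 then 1 else X (Sum.inl p.toNat)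

/-- `c_p`: equal to `b_p` for `p < k`, to `b_k + b̃_k` for `p = k`, and to `2b_p` for `p > k`. -/
def cB (k : ℕ) (p : ℤ) : RB :=
  if p < (k : ℤ) then bB p
  else if p = (k : ℤ) then bB k + btil
  else 2 * bB p

/-- The generators of the ideal `J^(k)`. -/
def Jset (k : ℕ) : Set RB :=
  {x | ∃ p : ℕ, k < p ∧
      x = bB p * bB p +
        ∑ i ∈ Finset.Icc 1 p, (-1 : RB) ^ i * bB ((p : ℤ) + i) * cB k ((p : ℤ) - i)} ∪
  {bB k * btil + ∑ i ∈ Finset.Icc 1 k, (-1 : RB) ^ i * bB ((k : ℤ) + i) * bB ((k : ℤ) - i)}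

/-- The ideal `J^(k)`. -/
def JQ (k : ℕ) : Ideal RB := Ideal.span (Jset k)

/-- `h^1_j(-t) = (-t_1)^j`. -/
def h1 (j : ℕ) : RB := (-tv 1) ^ j

/-- `b^1_k := b_k + Σ_{j=1}^k c_{k-j}(-t_1)^j`. -/
def bk1 (k : ℕ) : RB := bB k + ∑ j ∈ Finset.Icc 1 k, cB k ((k : ℤ) - j) * h1 j

/-- `b̃^1_k := b̃_k + Σ_{j=1}^k c_{k-j}(-t_1)^j`. -/
def btk1 (k : ℕ) : RB := btil + ∑ j ∈ Finset.Icc 1 k, cB k ((k : ℤ) - j) * h1 j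

/-- `a^1_p := (1/2)c_p + Σ_{j=1}^p c_{p-j}(-t_1)^j`. -/
def a1 (k : ℕ) (p : ℤ) : RB :=
  C (1/2 : ℚ) * cB k p + ∑ j ∈ Finset.Icc 1 p.toNat, cB k (p - j) * h1 j

/-! ### Auxiliary definitions and lemmas -/

/-- Abbreviation for `-t_1`. -/
def sQ : RB := -tv 1

/-- `a_p := (1/2) c_p`, for natural index. -/
def an (k n : ℕ) : RB := C (1/2 : ℚ) * cB k (n : ℤ)

/-- `a^1_p` for natural index. -/
def a1n (k n : ℕ) : RB := a1 k (n : ℤ)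

lemma h2c : (2:RB) * C (1/2:ℚ) = 1 := by rw [two_mul, ← C_add]; norm_num

lemma a1n_eq (k n : ℕ) :
    a1n k n = an k n + ∑ j ∈ Finset.Icc 1 n, cB k ((n:ℤ) - j) * sQ ^ j := by
  simp [a1n, a1, an, h1, sQ]

lemma shiftsum (m : ℕ) (f : ℕ → RB) : ∑ j ∈ Icc 1 (m+1), f j = f 1 + ∑ j ∈ Icc 1 m, f (j+1) := by
  rw [← Finset.Ico_add_one_right_eq_Icc, ← Finset.Ico_add_one_right_eq_Icc, Finset.sum_Ico_eq_sum_range,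
    Finset.sum_Ico_eq_sum_range]
  simp only [Nat.add_sub_cancel, Nat.succ_sub_one]
  rw [Finset.sum_range_succ']
  simp [add_comm, add_assoc, add_left_comm]

lemma a1n_zero (k : ℕ) : a1n k 0 = an k 0 := by simp [a1n_eq]

lemma recc (k n : ℕ) :
    a1n k (n+1) = an k (n+1) + sQ * an k n + sQ * a1n k n := by
  rw [a1n_eq, a1n_eq, shiftsum]
  have h1 : ((n+1:ℕ):ℤ) - (1:ℕ) = (n:ℤ) := by push_cast; ring
  have h2 : ∑ j ∈ Icc 1 n, cB k (((n+1:ℕ):ℤ) - ((j+1:ℕ):ℤ)) * sQ ^ (j+1)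
      = sQ * ∑ j ∈ Icc 1 n, cB k ((n:ℤ) - j) * sQ ^ j := by
    rw [Finset.mul_sum]
    refine Finset.sum_congr rfl fun j hj => ?_
    have : ((n+1:ℕ):ℤ) - ((j+1:ℕ):ℤ) = (n:ℤ) - j := by push_cast; ring
    rw [this, pow_succ]
    ring
  rw [h1, h2]
  have hcn : cB k ((n:ℤ)) * sQ = sQ * an k n + sQ * an k n := by
    unfold an
    have : cB k (n:ℤ) = (2:RB) * C (1/2:ℚ) * cB k (n:ℤ) := by rw [h2c, one_mul]
    nth_rewrite 1 [this]
    ring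
  linear_combination hcn

open PowerSeries in
lemma series_eq (g f : ℕ → RB) (hzero : f 0 = g 0)
    (hrec : ∀ n, f (n+1) = g (n+1) + sQ * g n + sQ * f n) :
    PowerSeries.mk f * PowerSeries.mk (fun n => (-1)^n * f n)
      = PowerSeries.mk g * PowerSeries.mk (fun n => (-1)^n * g n) := by
  set u : RB⟦X⟧ := PowerSeries.C sQ * PowerSeries.X with hu
  have hx : ∀ (φ : RB⟦X⟧) (n : ℕ), (PowerSeries.coeff (R := RB) (n+1)) (u * φ) = sQ * PowerSeries.coeff (R := RB) n φ := by
    intro φ n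
    rw [show u * φ = PowerSeries.X * (PowerSeries.C sQ * φ) by ring,
      PowerSeries.coeff_succ_X_mul, PowerSeries.coeff_C_mul]
  have e1 : (1 - u) * PowerSeries.mk f = (1 + u) * PowerSeries.mk g := by
    refine PowerSeries.ext fun n => ?_
    rcases n with _ | n
    · simp [sub_mul, add_mul, hzero, hu]
    · rw [sub_mul, add_mul, one_mul, one_mul, map_sub, map_add, hx, hx,
        PowerSeries.coeff_mk, PowerSeries.coeff_mk, PowerSeries.coeff_mk,
        PowerSeries.coeff_mk, hrec]
      ring
  have e2 : (1 + u) * PowerSeries.mk (fun n => (-1)^n * f n)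
      = (1 - u) * PowerSeries.mk (fun n => (-1)^n * g n) := by
    refine PowerSeries.ext fun n => ?_
    rcases n with _ | n
    · simp [sub_mul, add_mul, hzero, hu]
    · rw [sub_mul, add_mul, one_mul, one_mul, map_sub, map_add, hx, hx,
        PowerSeries.coeff_mk, PowerSeries.coeff_mk, PowerSeries.coeff_mk,
        PowerSeries.coeff_mk, hrec]
      ring
  have hD : (1 - u) * (1 + u) ≠ 0 := by
    intro h
    have := congrArg (PowerSeries.constantCoeff (R := RB)) h
    simp [hu] at this
  apply mul_left_cancel₀ hD
  calc (1 - u) * (1 + u) * (PowerSeries.mk f * PowerSeries.mk (fun n => (-1)^n * f n))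
      = ((1 - u) * PowerSeries.mk f) * ((1 + u) * PowerSeries.mk (fun n => (-1)^n * f n)) := by
        ring
    _ = ((1 + u) * PowerSeries.mk g) * ((1 - u) * PowerSeries.mk (fun n => (-1)^n * g n)) := by
        rw [e1, e2]
    _ = (1 - u) * (1 + u) * (PowerSeries.mk g * PowerSeries.mk (fun n => (-1)^n * g n)) := by
        ring

lemma sum_eq (g f : ℕ → RB) (hzero : f 0 = g 0)
    (hrec : ∀ n, f (n+1) = g (n+1) + sQ * g n + sQ * f n) (k : ℕ) :
    ∑ i ∈ range (2*k+1), f i * ((-1:RB)^(2*k-i) * f (2*k-i))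
      = ∑ i ∈ range (2*k+1), g i * ((-1:RB)^(2*k-i) * g (2*k-i)) := by
  have h := congrArg (PowerSeries.coeff (R := RB) (2*k)) (series_eq g f hzero hrec)
  rw [PowerSeries.coeff_mul, PowerSeries.coeff_mul,
    Finset.Nat.sum_antidiagonal_eq_sum_range_succ_mk,
    Finset.Nat.sum_antidiagonal_eq_sum_range_succ_mk] at h
  simpa using h

lemma negpow (k r : ℕ) (hr : r ≤ k) : (-1:RB)^(k-r) = (-1:RB)^(k+r) := by
  have h : k + r = (k - r) + 2*r := by omega
  rw [h, pow_add, pow_mul]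
  simp

lemma split (f : ℕ → RB) (k : ℕ) :
    ∑ i ∈ range (2*k+1), f i * ((-1:RB)^(2*k-i) * f (2*k-i))
      = (-1:RB)^k * ((f k * f k) + 2 * ∑ r ∈ Icc 1 k, (-1:RB)^r * f (k+r) * f (k-r)) := by
  have hsplit : ∑ i ∈ range (2*k+1), f i * ((-1:RB)^(2*k-i) * f (2*k-i))
      = ∑ i ∈ range k, f i * ((-1:RB)^(2*k-i) * f (2*k-i))
        + f k * ((-1:RB)^(2*k-k) * f (2*k-k))
        + ∑ i ∈ Ico (k+1) (2*k+1), f i * ((-1:RB)^(2*k-i) * f (2*k-i)) := by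
    rw [range_eq_Ico,
      ← Finset.sum_Ico_consecutive _ (by omega : 0 ≤ k+1) (by omega : k+1 ≤ 2*k+1),
      ← range_eq_Ico, Finset.sum_range_succ]
  have him1 : range k = Finset.image (fun r => k - r) (Icc 1 k) := by
    ext i; simp only [mem_range, mem_image, mem_Icc]
    constructor
    · intro h; exact ⟨k - i, by omega, by omega⟩
    · rintro ⟨r, hr, rfl⟩; omega
  have him2 : Finset.Ico (k+1) (2*k+1) = Finset.image (fun r => k + r) (Icc 1 k) := by
    ext i; simp only [mem_Ico, mem_image, mem_Icc]
    constructor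
    · intro h; exact ⟨i - k, by omega, by omega⟩
    · rintro ⟨r, hr, rfl⟩; omega
  have hs1 : ∑ i ∈ range k, f i * ((-1:RB)^(2*k-i) * f (2*k-i))
      = ∑ r ∈ Icc 1 k, (-1:RB)^(k+r) * f (k+r) * f (k-r) := by
    rw [him1, Finset.sum_image (by intro x hx y hy h; simp only [Finset.coe_Icc, Set.mem_Icc] at hx hy h; omega)]
    refine Finset.sum_congr rfl fun r hr => ?_
    simp only [mem_Icc] at hr
    rw [show 2*k - (k - r) = k + r by omega]
    ring
  have hs2 : ∑ i ∈ Ico (k+1) (2*k+1), f i * ((-1:RB)^(2*k-i) * f (2*k-i))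
      = ∑ r ∈ Icc 1 k, (-1:RB)^(k+r) * f (k+r) * f (k-r) := by
    rw [him2, Finset.sum_image (by intro x hx y hy h; simp only at h; omega)]
    refine Finset.sum_congr rfl fun r hr => ?_
    simp only [mem_Icc] at hr
    rw [show 2*k - (k + r) = k - r by omega, negpow k r hr.2]
    ring
  have hpull : ∑ r ∈ Icc 1 k, (-1:RB)^(k+r) * f (k+r) * f (k-r)
      = (-1:RB)^k * ∑ r ∈ Icc 1 k, (-1:RB)^r * f (k+r) * f (k-r) := by
    rw [Finset.mul_sum]
    refine Finset.sum_congr rfl fun r hr => ?_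
    rw [pow_add]; ring
  rw [hsplit, hs1, hs2, hpull, show 2*k-k = k by omega]
  ring

/-- In `B^(k)[t] ⊗ ℚ` the relation
`b̃^1_k · b^1_k + 2 Σ_{r=1}^k (-1)^r a^1_{k+r} a^1_{k-r} = 0` holds. -/
theorem statement15 (k : ℕ) (hk : 1 ≤ k) :
    btk1 k * bk1 k +
      2 * ∑ r ∈ Finset.Icc 1 k, (-1 : RB) ^ r * a1 k ((k : ℤ) + r) * a1 k ((k : ℤ) - r)
    ∈ JQ k := by
  set S : RB := ∑ j ∈ Finset.Icc 1 k, cB k ((k : ℤ) - j) * h1 j with hS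
  -- step 1: cast to natural indices
  have hcast : ∑ r ∈ Finset.Icc 1 k, (-1 : RB) ^ r * a1 k ((k : ℤ) + r) * a1 k ((k : ℤ) - r)
      = ∑ r ∈ Finset.Icc 1 k, (-1 : RB) ^ r * a1n k (k+r) * a1n k (k-r) := by
    refine Finset.sum_congr rfl fun r hr => ?_
    simp only [mem_Icc] at hr
    have e1 : ((k : ℤ) + r) = ((k + r : ℕ) : ℤ) := by push_cast; ring
    have e2 : ((k : ℤ) - r) = ((k - r : ℕ) : ℤ) := by
      have : (((k - r : ℕ)) : ℤ) = (k : ℤ) - r := by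
        rw [Nat.cast_sub hr.2]
      omega
    rw [e1, e2]; rfl
  -- step 2: main identity from power series
  have hsum := sum_eq (an k) (a1n k) (a1n_zero k) (recc k) k
  rw [split (a1n k) k, split (an k) k] at hsum
  have hne : ((-1:RB)^k) ≠ 0 := pow_ne_zero _ (by norm_num)
  have hstar : a1n k k * a1n k k
        + 2 * ∑ r ∈ Icc 1 k, (-1:RB)^r * a1n k (k+r) * a1n k (k-r)
      = an k k * an k k
        + 2 * ∑ r ∈ Icc 1 k, (-1:RB)^r * an k (k+r) * an k (k-r) :=
    mul_left_cancel₀ hne hsum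
  -- step 3: the a-sum is the generator sum
  have hbb : 2 * ∑ r ∈ Icc 1 k, (-1:RB)^r * an k (k+r) * an k (k-r)
      = ∑ i ∈ Finset.Icc 1 k, (-1 : RB) ^ i * bB ((k : ℤ) + i) * bB ((k : ℤ) - i) := by
    rw [Finset.mul_sum]
    refine Finset.sum_congr rfl fun r hr => ?_
    simp only [mem_Icc] at hr
    have hp : an k (k+r) = C (1/2:ℚ) * (2 * bB ((k:ℤ) + r)) := by
      unfold an cB
      rw [if_neg (by push_cast; omega), if_neg (by push_cast; omega)]
      norm_num
    have hm : an k (k-r) = C (1/2:ℚ) * bB ((k:ℤ) - r) := by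
      unfold an cB
      rw [if_pos (by rw [Nat.cast_sub hr.2]; omega)]
      rw [Nat.cast_sub hr.2]
    rw [hp, hm]
    linear_combination ((2 * C (1/2:ℚ) + 1) * ((-1:RB)^r * bB ((k:ℤ)+r) * bB ((k:ℤ)-r))) * h2c
  -- step 4: expressions for a1n k k and an k k
  have hak : an k k = C (1/2:ℚ) * (bB (k:ℤ) + btil) := by
    unfold an cB
    rw [if_neg (lt_irrefl _), if_pos rfl]
  have hfk : a1n k k = an k k + S := by
    rw [a1n_eq, hS]
    congr 1
  rw [hak] at hfk hstar
  rw [hfk] at hstar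
  -- step 5: conclude
  have heq : btk1 k * bk1 k +
      2 * ∑ r ∈ Finset.Icc 1 k, (-1 : RB) ^ r * a1 k ((k : ℤ) + r) * a1 k ((k : ℤ) - r)
      = bB k * btil + ∑ i ∈ Finset.Icc 1 k, (-1 : RB) ^ i * bB ((k : ℤ) + i) * bB ((k : ℤ) - i) := by
    rw [hcast]
    show (btil + S) * (bB (k:ℤ) + S) + _ = _
    linear_combination hstar + hbb - ((bB (k:ℤ) + btil) * S) * h2c
  rw [heq]
  exact Ideal.subset_span (Or.inr rfl)
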